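/- arXiv:1004.2478 — 2 statements merged into one kernel-verified Lean document; each statement's English description precedes it below -/
import Mathlib

section
/- Let G be a simple graph on n vertices with m edges and let k = 2(n²−n) − m. Then G has an orientation of diameter at most 2 if and only if G has an orientation whose Wiener index is at most k. -/
/-- `reachIn D k x y` : there is a directed walk of length exactly `k` from `x` to `y`
in the directed graph given by the relation `D`. -/
def reachIn {V : Type*} (D : V → V → Prop) : ℕ → V → V → Prop
  | 0, x, y => x = y
  | n + 1, x, y => ∃ z, D x z ∧ reachIn D n z y

/-- Directed distance: length of a shortest directed path (`⊤` if none exists). -/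
noncomputable def ddist {V : Type*} (D : V → V → Prop) (x y : V) : ℕ∞ :=
  sInf {n : ℕ∞ | ∃ k : ℕ, (k : ℕ∞) = n ∧ reachIn D k x y}

/-- Directed diameter: sup of directed distances over ordered pairs of distinct vertices. -/
noncomputable def ddiam {V : Type*} (D : V → V → Prop) : ℕ∞ :=
  sSup {n : ℕ∞ | ∃ x y : V, x ≠ y ∧ ddist D x y = n}

open Classical in
/-- Wiener index of a directed graph: sum of directed distances over ordered pairs
of distinct vertices. -/
noncomputable def wiener {V : Type*} [Fintype V] (D : V → V → Prop) : ℕ∞ :=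
  ∑ x : V, ∑ y : V, if x ≠ y then ddist D x y else 0

/-- `D` is an orientation of the simple graph `G`: every arc of `D` comes from an edge
of `G`, and each edge of `G` gets exactly one of its two directions. -/
def IsOrientation {V : Type*} (G : SimpleGraph V) (D : V → V → Prop) : Prop :=
  ∀ u v : V, (D u v → G.Adj u v) ∧ (G.Adj u v → (D u v ↔ ¬ D v u))

section Aux
variable {V : Type*} {D : V → V → Prop} {x y : V}

lemma ddist_le_one (h : D x y) : ddist D x y ≤ 1 :=
  sInf_le ⟨1, rfl, ⟨y, h, rfl⟩⟩

lemma one_le_ddist (h : x ≠ y) : 1 ≤ ddist D x y := by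
  apply le_sInf
  rintro n ⟨k, rfl, hk⟩
  match k, hk with
  | 0, hk => exact absurd hk h
  | (k+1), hk => exact_mod_cast Nat.succ_le_succ (Nat.zero_le k)

lemma two_le_ddist (h : x ≠ y) (hnd : ¬ D x y) : 2 ≤ ddist D x y := by
  apply le_sInf
  rintro n ⟨k, rfl, hk⟩
  match k, hk with
  | 0, hk => exact absurd hk h
  | 1, hk => obtain ⟨z, hz, rfl⟩ := hk; exact absurd hz hnd
  | (k+2), hk => exact_mod_cast Nat.succ_le_succ (Nat.succ_le_succ (Nat.zero_le k))

lemma three_le_ddist (h : ¬ ddist D x y ≤ 2) : 3 ≤ ddist D x y := by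
  have h2 : (2 : ℕ∞) < ddist D x y := lt_of_not_ge h
  exact (ENat.add_one_le_iff (by decide)).mpr h2

lemma ddist_le_ddiam (h : x ≠ y) : ddist D x y ≤ ddiam D :=
  le_sSup ⟨x, y, h, rfl⟩

lemma ddiam_le_two (h : ∀ x y : V, x ≠ y → ddist D x y ≤ 2) : ddiam D ≤ 2 := by
  apply sSup_le
  rintro n ⟨a, b, hab, rfl⟩
  exact h a b hab

end Aux

open Classical in
lemma arcs_count {V : Type*} [Fintype V] {G : SimpleGraph V} {D : V → V → Prop}
    (hD : IsOrientation G D) :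
    ∑ x : V, ∑ y : V, (if D x y then 1 else 0 : ℕ) = Nat.card G.edgeSet := by
  classical
  have h1 : ∑ x : V, ∑ y : V, (if D x y then 1 else 0 : ℕ)
      = Nat.card {p : V × V // D p.1 p.2} := by
    rw [← Fintype.sum_prod_type', Nat.card_eq_fintype_card, Fintype.card_subtype]
    simp [Finset.sum_boole]
  rw [h1]
  apply Nat.card_congr
  refine Equiv.ofBijective (fun p => ⟨s(p.1.1, p.1.2), (hD p.1.1 p.1.2).1 p.2⟩) ⟨?_, ?_⟩
  · rintro ⟨⟨x, y⟩, hxy⟩ ⟨⟨x', y'⟩, hxy'⟩ h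
    simp only [Subtype.mk.injEq, Subtype.ext_iff, Sym2.eq_iff, Sym2.eq, Sym2.rel_iff', Prod.mk.injEq, Prod.swap_prod_mk] at h
    rcases h with ⟨rfl, rfl⟩ | ⟨h1, h2⟩
    · rfl
    · subst h1; subst h2
      exact absurd hxy' (((hD x y).2 ((hD x y).1 hxy)).mp hxy)
  · rintro ⟨e, he⟩
    induction e using Sym2.ind with
    | _ u v =>
      rw [SimpleGraph.mem_edgeSet] at he
      by_cases h : D u v
      · exact ⟨⟨(u, v), h⟩, rfl⟩
      · refine ⟨⟨(v, u), ((hD v u).2 he.symm).mpr (by simpa using h)⟩, ?_⟩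
        exact Subtype.ext (Sym2.eq_swap)

open Classical in
/-- The key counting identity: for any orientation `D` of `G`, the sum of the
"target" values (0 on the diagonal, 1 on arcs, 2 elsewhere) equals `2(n²−n) − m`. -/
lemma g_sum {V : Type*} [Fintype V] {G : SimpleGraph V} {D : V → V → Prop}
    (hD : IsOrientation G D) :
    (∑ x : V, ∑ y : V, (if x = y then 0 else if D x y then 1 else 2 : ℕ))
        + Nat.card G.edgeSet = 2 * ((Fintype.card V) ^ 2 - Fintype.card V) := by
  classical
  have harc := arcs_count hD
  have hsplit : ∀ x y : V, (if x = y then 0 else if D x y then 1 else 2 : ℕ)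
      + (if D x y then 1 else 0) = (if x = y then 0 else 2) := by
    intro x y
    by_cases hxy : x = y
    · subst hxy
      have hnd : ¬ D x x := fun h => (G.irrefl ((hD x x).1 h))
      simp [hnd]
    · by_cases hd : D x y <;> simp [hxy, hd]
  have hinner : ∀ x : V, ∑ y : V, (if x = y then 0 else 2 : ℕ) = 2 * Fintype.card V - 2 := by
    intro x
    have hA : ∑ y : V, ((if x = y then 0 else 2 : ℕ) + (if x = y then 2 else 0))
        = 2 * Fintype.card V := by
      have : ∀ y : V, ((if x = y then 0 else 2 : ℕ) + (if x = y then 2 else 0)) = 2 := by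
        intro y; by_cases h : x = y <;> simp [h]
      rw [Finset.sum_congr rfl (fun y _ => this y)]
      simp [Finset.card_univ, Nat.mul_comm]
    rw [Finset.sum_add_distrib] at hA
    have hB : ∑ y : V, (if x = y then 2 else 0 : ℕ) = 2 := by
      simp [Finset.sum_ite_eq]
    omega
  have h2 : ∑ x : V, ∑ y : V, (if x = y then 0 else 2 : ℕ)
      = 2 * ((Fintype.card V) ^ 2 - Fintype.card V) := by
    rw [Finset.sum_congr rfl (fun x _ => hinner x), Finset.sum_const, Finset.card_univ,
      smul_eq_mul, Nat.mul_sub, Nat.mul_sub, pow_two]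
    ring_nf
  have hcomb : (∑ x : V, ∑ y : V, (if x = y then 0 else if D x y then 1 else 2 : ℕ))
      + ∑ x : V, ∑ y : V, (if D x y then 1 else 0 : ℕ)
      = ∑ x : V, ∑ y : V, (if x = y then 0 else 2 : ℕ) := by
    rw [← Finset.sum_add_distrib]
    refine Finset.sum_congr rfl fun x _ => ?_
    rw [← Finset.sum_add_distrib]
    exact Finset.sum_congr rfl fun y _ => hsplit x y
  omega

lemma cast_dsum {V : Type*} [Fintype V] (f : V → V → ℕ) :
    (∑ x : V, ∑ y : V, ((f x y : ℕ) : ℕ∞)) = ((∑ x : V, ∑ y : V, f x y : ℕ) : ℕ∞) := by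
  push_cast
  rfl

open Classical in
/-- With `k = 2(n² − n) − m`, a simple graph has an orientation of diameter at most `2`
iff it has an orientation of Wiener index at most `k`. -/
theorem orientation_diam_two_iff_wiener {V : Type*} [Fintype V] (G : SimpleGraph V) :
    (∃ D : V → V → Prop, IsOrientation G D ∧ ddiam D ≤ 2) ↔
      (∃ D : V → V → Prop, IsOrientation G D ∧
        wiener D ≤ ((2 * ((Fintype.card V) ^ 2 - Fintype.card V) - Nat.card G.edgeSet : ℕ) : ℕ∞)) := by
  classical
  constructor
  · rintro ⟨D, hD, hdiam⟩
    refine ⟨D, hD, ?_⟩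
    have hg := g_sum hD
    have hle : wiener D
        ≤ ((∑ x : V, ∑ y : V, (if x = y then 0 else if D x y then 1 else 2 : ℕ)) : ℕ∞) := by
      rw [wiener]
      refine Finset.sum_le_sum fun x _ => Finset.sum_le_sum fun y _ => ?_
      by_cases hxy : x = y
      · simp [hxy]
      · by_cases hd : D x y
        · simpa [hxy, hd] using ddist_le_one hd
        · simpa [hxy, hd] using (ddist_le_ddiam hxy).trans hdiam
    refine hle.trans ?_
    rw [cast_dsum]
    have heq : (∑ x : V, ∑ y : V, (if x = y then 0 else if D x y then 1 else 2 : ℕ))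
        = 2 * ((Fintype.card V) ^ 2 - Fintype.card V) - Nat.card G.edgeSet := by omega
    exact_mod_cast heq.le
  · rintro ⟨D, hD, hw⟩
    refine ⟨D, hD, ?_⟩
    have hg := g_sum hD
    apply ddiam_le_two
    intro a b hab
    by_contra h3
    have hnd : ¬ D a b := fun hd => h3 ((ddist_le_one hd).trans (by decide))
    -- lower bound on wiener
    have hlow : (((∑ x : V, ∑ y : V, (if x = y then 0 else if D x y then 1 else 2 : ℕ))
        + 1 : ℕ) : ℕ∞) ≤ wiener D := by
      have hdelta : ∑ x : V, ∑ y : V, (if x = a ∧ y = b then 1 else 0 : ℕ) = 1 := by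
        have hrow : ∀ x : V, ∑ y : V, (if x = a ∧ y = b then 1 else 0 : ℕ)
            = (if x = a then 1 else 0) := by
          intro x
          by_cases hx : x = a <;> simp [hx, Finset.sum_ite_eq']
        rw [Finset.sum_congr rfl (fun x _ => hrow x)]
        simp [Finset.sum_ite_eq']
      have hsum : (∑ x : V, ∑ y : V,
          ((if x = y then 0 else if D x y then 1 else 2 : ℕ) + (if x = a ∧ y = b then 1 else 0)))
          = (∑ x : V, ∑ y : V, (if x = y then 0 else if D x y then 1 else 2 : ℕ)) + 1 := by
        have hd2 : (∑ x : V, ∑ y : V,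
            ((if x = y then 0 else if D x y then 1 else 2 : ℕ) + (if x = a ∧ y = b then 1 else 0)))
            = (∑ x : V, ∑ y : V, (if x = y then 0 else if D x y then 1 else 2 : ℕ))
              + ∑ x : V, ∑ y : V, (if x = a ∧ y = b then 1 else 0 : ℕ) := by
          rw [← Finset.sum_add_distrib]
          exact Finset.sum_congr rfl fun x _ => by rw [← Finset.sum_add_distrib]
        rw [hd2, hdelta]
      rw [← hsum, ← cast_dsum, wiener]
      refine Finset.sum_le_sum fun x _ => Finset.sum_le_sum fun y _ => ?_
      by_cases hxy : x = y
      · subst hxy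
        have hδ : ¬ (x = a ∧ x = b) := fun h => hab (h.1 ▸ h.2 ▸ rfl)
        simp [hδ]
      · by_cases hab' : x = a ∧ y = b
        · obtain ⟨rfl, rfl⟩ := hab'
          simpa [hxy, hnd] using three_le_ddist h3
        · by_cases hd : D x y
          · simpa [hxy, hd, hab'] using one_le_ddist hxy
          · simpa [hxy, hd, hab'] using two_le_ddist hxy hd
    have hfin : ((∑ x : V, ∑ y : V, (if x = y then 0 else if D x y then 1 else 2 : ℕ)) + 1 : ℕ)
        ≤ 2 * ((Fintype.card V) ^ 2 - Fintype.card V) - Nat.card G.edgeSet :=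
      Nat.cast_le.mp (hlow.trans hw)
    omega
end

section
/- The complete graph K_n (n ≥ 3) has an orientation of diameter at most 2 if and only if n ≠ 4; in particular, K_3 has an orientation of diameter 2 and K_4 has no orientation of diameter at most 2. -/
section Aux

lemma ddist_le_two_iff {V : Type*} (D : V → V → Prop) (x y : V) :
    ddist D x y ≤ 2 ↔ ∃ k ≤ 2, reachIn D k x y := by
  constructor
  · intro h
    by_contra hc
    push_neg at hc
    have h3 : (3 : ℕ∞) ≤ ddist D x y := by
      apply le_sInf
      rintro _ ⟨k, rfl, hk⟩
      have : ¬ k ≤ 2 := fun hk2 => hc k hk2 hk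
      exact_mod_cast Nat.cast_le.mpr (by omega : 3 ≤ k)
    have := h3.trans h
    norm_num at this
  · rintro ⟨k, hk2, hk⟩
    calc ddist D x y ≤ (k : ℕ∞) := sInf_le ⟨k, rfl, hk⟩
    _ ≤ 2 := by exact_mod_cast hk2
 
lemma ddiam_le_two_iff {V : Type*} (D : V → V → Prop) :
    ddiam D ≤ 2 ↔ ∀ x y : V, x ≠ y → D x y ∨ ∃ z, D x z ∧ D z y := by
  have hr : ∀ x y : V, (∃ k ≤ 2, reachIn D k x y) ↔ (x = y ∨ D x y ∨ ∃ z, D x z ∧ D z y) := by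
    intro x y
    constructor
    · rintro ⟨k, hk2, hk⟩
      interval_cases k
      · exact Or.inl hk
      · obtain ⟨z, hz, rfl⟩ := hk
        exact Or.inr (Or.inl hz)
      · obtain ⟨z, hz, w, hw, rfl⟩ := hk
        exact Or.inr (Or.inr ⟨z, hz, hw⟩)
    · rintro (rfl | h | ⟨z, h1, h2⟩)
      · exact ⟨0, by norm_num, rfl⟩
      · exact ⟨1, by norm_num, ⟨y, h, rfl⟩⟩
      · exact ⟨2, le_refl _, ⟨z, h1, y, h2, rfl⟩⟩
  constructor
  · intro h x y hxy
    unfold ddiam at h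
    have hmem : ddist D x y ∈ {n : ℕ∞ | ∃ a b : V, a ≠ b ∧ ddist D a b = n} := ⟨x, y, hxy, rfl⟩
    have hd : ddist D x y ≤ 2 := le_trans (le_sSup hmem) h
    rcases (hr x y).mp ((ddist_le_two_iff D x y).mp hd) with rfl | h | h
    · exact absurd rfl hxy
    · exact Or.inl h
    · exact Or.inr h
  · intro h
    unfold ddiam
    apply sSup_le
    rintro _ ⟨x, y, hxy, rfl⟩
    exact (ddist_le_two_iff D x y).mpr ((hr x y).mpr (Or.inr (h x y hxy)))


def distC (m a b : ℕ) : ℕ := if a ≤ b then b - a else b + m - a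

def Dodd (h : ℕ) (i j : Fin (2*h+1)) : Prop :=
  i ≠ j ∧ distC (2*h+1) i.val j.val ≤ h

lemma Dodd_orient (h : ℕ) : IsOrientation (SimpleGraph.completeGraph (Fin (2*h+1))) (Dodd h) := by
  intro u v
  constructor
  · rintro ⟨h1, -⟩; simpa [SimpleGraph.completeGraph] using h1
  · intro huv
    have huv' : u.val ≠ v.val := by
      simp only [SimpleGraph.completeGraph, SimpleGraph.top_adj, Ne, Fin.ext_iff] at huv; exact huv
    have hu := u.isLt; have hv := v.isLt
    unfold Dodd distC
    simp only [Ne, Fin.ext_iff]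
    split_ifs <;> omega

lemma Dodd_diam (h : ℕ) (hh : 1 ≤ h) (x y : Fin (2*h+1)) (hxy : x ≠ y) :
    Dodd h x y ∨ ∃ z, Dodd h x z ∧ Dodd h z y := by
  have hxy' : x.val ≠ y.val := fun e => hxy (Fin.ext e)
  by_cases hd : distC (2*h+1) x.val y.val ≤ h
  · exact Or.inl ⟨hxy, hd⟩
  · right
    obtain ⟨c, hc, hca, hcb, h1, h2⟩ :
        ∃ c, c < 2*h+1 ∧ c ≠ x.val ∧ c ≠ y.val ∧
          distC (2*h+1) x.val c ≤ h ∧ distC (2*h+1) c y.val ≤ h := by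
      refine ⟨if x.val + (distC (2*h+1) x.val y.val - h) < 2*h+1
          then x.val + (distC (2*h+1) x.val y.val - h)
          else x.val + (distC (2*h+1) x.val y.val - h) - (2*h+1), ?_, ?_, ?_, ?_, ?_⟩ <;>
        · have hu := x.isLt; have hv := y.isLt
          unfold distC at *
          split_ifs at * <;> omega
    exact ⟨⟨c, hc⟩, ⟨fun e => hca (Fin.ext_iff.mp e).symm, h1⟩,
      ⟨fun e => hcb (Fin.ext_iff.mp e), h2⟩⟩

def Dev (h : ℕ) (i j : Fin (2*h+2)) : Prop :=
  i ≠ j ∧ (if j.val = 2*h+1 then (i.val ≠ 0 ∧ i.val ≠ h+1)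
    else if i.val = 2*h+1 then (j.val = 0 ∨ j.val = h+1)
    else distC (2*h+1) i.val j.val ≤ h)

lemma Dev_orient (h : ℕ) : IsOrientation (SimpleGraph.completeGraph (Fin (2*h+2))) (Dev h) := by
  intro u v
  constructor
  · rintro ⟨h1, -⟩; simpa [SimpleGraph.completeGraph] using h1
  · intro huv
    have huv' : u.val ≠ v.val := by
      simp only [SimpleGraph.completeGraph, SimpleGraph.top_adj, Ne, Fin.ext_iff] at huv; exact huv
    have hu := u.isLt; have hv := v.isLt
    unfold Dev distC
    simp only [Ne, Fin.ext_iff]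
    split_ifs <;> omega

lemma Dev_diam (h : ℕ) (hh : 2 ≤ h) (x y : Fin (2*h+2)) (hxy : x ≠ y) :
    Dev h x y ∨ ∃ z, Dev h x z ∧ Dev h z y := by
  have hxy' : x.val ≠ y.val := fun e => hxy (Fin.ext e)
  have hu := x.isLt; have hv := y.isLt
  by_cases hy : y.val = 2*h+1
  · -- y is the extra vertex
    by_cases hx0 : x.val = 0 ∨ x.val = h+1
    · right
      refine ⟨⟨x.val + 1, by omega⟩, ⟨?_, ?_⟩, ⟨?_, ?_⟩⟩
      · (try simp only [Ne, Fin.ext_iff]); omega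
      · (try simp only [Dev, distC])
        rw [if_neg (by omega), if_neg (by omega), if_pos (by omega)]
        omega
      · (try simp only [Ne, Fin.ext_iff]); omega
      · (try simp only [Dev])
        rw [if_pos hy]
        omega
    · left
      refine ⟨hxy, ?_⟩
      rw [if_pos hy]
      omega
  · by_cases hx : x.val = 2*h+1
    · -- x is the extra vertex
      by_cases hy0 : y.val = 0 ∨ y.val = h+1
      · exact Or.inl ⟨hxy, by rw [if_neg hy, if_pos hx]; exact hy0⟩
      · right
        by_cases hyl : y.val ≤ h
        · refine ⟨⟨0, by omega⟩, ⟨?_, ?_⟩, ⟨?_, ?_⟩⟩ <;>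
            · (try simp only [Ne, Fin.ext_iff]); (try simp only [Dev, distC, Fin.val_mk])
              first
              | (split_ifs <;> first | omega | tauto | simp_all)
              | omega
        · refine ⟨⟨h+1, by omega⟩, ⟨?_, ?_⟩, ⟨?_, ?_⟩⟩ <;>
            · (try simp only [Ne, Fin.ext_iff]); (try simp only [Dev, distC, Fin.val_mk])
              first
              | (split_ifs <;> first | omega | tauto | simp_all)
              | omega
    · -- both in the rotational part
      by_cases hd : distC (2*h+1) x.val y.val ≤ h
      · exact Or.inl ⟨hxy, by rw [if_neg hy, if_neg hx]; exact hd⟩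
      · right
        obtain ⟨c, hc, hca, hcb, h1, h2⟩ :
            ∃ c, c < 2*h+1 ∧ c ≠ x.val ∧ c ≠ y.val ∧
              distC (2*h+1) x.val c ≤ h ∧ distC (2*h+1) c y.val ≤ h := by
          refine ⟨if x.val + (distC (2*h+1) x.val y.val - h) < 2*h+1
              then x.val + (distC (2*h+1) x.val y.val - h)
              else x.val + (distC (2*h+1) x.val y.val - h) - (2*h+1), ?_, ?_, ?_, ?_, ?_⟩ <;>
            · unfold distC at *
              split_ifs at * <;> omega
        refine ⟨⟨c, by omega⟩, ⟨?_, ?_⟩, ⟨?_, ?_⟩⟩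
        · (try simp only [Ne, Fin.ext_iff]); omega
        · (try simp only [Dev])
          rw [if_neg (by omega), if_neg hx]; exact h1
        · (try simp only [Ne, Fin.ext_iff]); omega
        · (try simp only [Dev])
          rw [if_neg hy, if_neg (by omega)]; exact h2


def T4 (a b c d e f : Bool) : Fin 4 → Fin 4 → Bool :=
  fun i j =>
    match i, j with
    | 0, 1 => a | 0, 2 => b | 0, 3 => c
    | 1, 0 => !a | 2, 0 => !b | 3, 0 => !c
    | 1, 2 => d | 1, 3 => e | 2, 3 => f
    | 2, 1 => !d | 3, 1 => !e | 3, 2 => !f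
    | _, _ => false

lemma four_bool : ∀ a b c d e f : Bool,
    ¬ (∀ x y : Fin 4, x ≠ y →
        (T4 a b c d e f x y = true ∨
          ∃ z, T4 a b c d e f x z = true ∧ T4 a b c d e f z y = true)) := by
  decide

end Aux

/-- For `n ≥ 3`, the complete graph `K_n` has an orientation of diameter at most `2`
iff `n ≠ 4`. -/
theorem completeGraph_orientation_diam_two_iff (n : ℕ) (hn : 3 ≤ n) :
    (∃ D : Fin n → Fin n → Prop,
        IsOrientation (SimpleGraph.completeGraph (Fin n)) D ∧ ddiam D ≤ 2) ↔ n ≠ 4 := by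
  constructor
  · rintro ⟨D, hor, hd⟩ h4
    subst h4
    classical
    have hP : ∀ x y : Fin 4, x ≠ y → D x y ∨ ∃ z, D x z ∧ D z y :=
      (ddiam_le_two_iff D).mp hd
    have hne : ∀ x y : Fin 4, D x y → x ≠ y := by
      intro x y hD
      have := (hor x y).1 hD
      simpa [SimpleGraph.completeGraph] using this
    have hasym : ∀ x y : Fin 4, x ≠ y → (D x y ↔ ¬ D y x) := by
      intro x y hxy
      exact (hor x y).2 (by simpa [SimpleGraph.completeGraph] using hxy)
    set g : Fin 4 → Fin 4 → Bool := fun i j => decide (D i j) with hg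
    have hDT : ∀ x y : Fin 4, D x y →
        T4 (g 0 1) (g 0 2) (g 0 3) (g 1 2) (g 1 3) (g 2 3) x y = true := by
      intro x y hD
      have hxy := hne x y hD
      fin_cases x <;> fin_cases y <;>
        first
        | exact absurd rfl hxy
        | (simp only [T4, hg, Fin.zero_eta, Fin.mk_one, Fin.reduceFinMk, Fin.isValue, decide_eq_true_iff]; exact hD)
        | (simp only [T4, hg, Fin.zero_eta, Fin.mk_one, Fin.reduceFinMk, Fin.isValue, Bool.not_eq_true', decide_eq_false_iff_not]
           exact (hasym _ _ (by decide)).mp hD)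
    exact four_bool (g 0 1) (g 0 2) (g 0 3) (g 1 2) (g 1 3) (g 2 3)
      (fun x y hxy => by
        rcases hP x y hxy with h | ⟨z, h1, h2⟩
        · exact Or.inl (hDT x y h)
        · exact Or.inr ⟨z, hDT x z h1, hDT z y h2⟩)
  · intro hne
    rcases Nat.even_or_odd n with he | ho
    · obtain ⟨h, rfl⟩ : ∃ h, n = 2*h+2 := by
        obtain ⟨k, hk⟩ := he
        exact ⟨k - 1, by omega⟩
      have hh : 2 ≤ h := by omega
      exact ⟨Dev h, Dev_orient h, (ddiam_le_two_iff _).mpr (Dev_diam h hh)⟩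
    · obtain ⟨h, rfl⟩ : ∃ h, n = 2*h+1 := by
        obtain ⟨k, hk⟩ := ho
        exact ⟨k, by omega⟩
      have hh : 1 ≤ h := by omega
      exact ⟨Dodd h, Dodd_orient h, (ddiam_le_two_iff _).mpr (Dodd_diam h hh)⟩
end
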